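/- Let I be a tall ideal on ω. If add*(I) = cov*(I) = κ, then there is a cotower in I of height κ; that is, there is a ⊆*-increasing sequence (A_α)_{α<κ} in I such that every infinite X ⊆ ω has infinite intersection with some A_α. -/

import Mathlib

open Set Cardinal

/-- `I` is a (proper) ideal on ω containing all finite sets. -/
def IsIdealOmega (I : Set (Set ℕ)) : Prop :=
  (∀ A ∈ I, ∀ B ⊆ A, B ∈ I) ∧ (∀ A ∈ I, ∀ B ∈ I, A ∪ B ∈ I) ∧
    (∀ A : Set ℕ, A.Finite → A ∈ I) ∧ Set.univ ∉ I

/-- `I` is tall: every infinite set contains an infinite member of `I`. -/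
def IsTall (I : Set (Set ℕ)) : Prop :=
  ∀ X : Set ℕ, X.Infinite → ∃ A ∈ I, A ⊆ X ∧ A.Infinite

/-- add*(I): least size of a ⊆*-unbounded family in `I`. -/
noncomputable def addStar (I : Set (Set ℕ)) : Cardinal :=
  sInf {c | ∃ A : Set (Set ℕ), A ⊆ I ∧ Cardinal.mk A = c ∧
    ¬ ∃ B ∈ I, ∀ a ∈ A, (a \ B).Finite}

/-- cov*(I): least size of a family in `I` meeting every infinite set infinitely. -/
noncomputable def covStar (I : Set (Set ℕ)) : Cardinal :=
  sInf {c | ∃ D : Set (Set ℕ), D ⊆ I ∧ Cardinal.mk D = c ∧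
    ∀ X : Set ℕ, X.Infinite → ∃ A ∈ D, (X ∩ A).Infinite}

lemma my_sUnion_mem {I : Set (Set ℕ)} (hI : IsIdealOmega I) {F : Set (Set ℕ)}
    (hfin : F.Finite) : F ⊆ I → ⋃₀ F ∈ I := by
  induction F, hfin using Set.Finite.induction_on with
  | empty => exact fun _ => by simpa using hI.2.2.1 ∅ finite_empty
  | @insert a s _ _ ih =>
    intro hF
    rw [sUnion_insert]
    exact hI.2.1 a (hF (mem_insert a s)) _ (ih (fun x hx => hF (mem_insert_of_mem a hx)))

lemma my_exists_bound {I : Set (Set ℕ)} {F : Set (Set ℕ)}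
    (hF : F ⊆ I) (hlt : #F < addStar I) : ∃ B ∈ I, ∀ a ∈ F, (a \ B).Finite := by
  by_contra h
  have hmem : #F ∈ {c | ∃ A : Set (Set ℕ), A ⊆ I ∧ Cardinal.mk A = c ∧
      ¬ ∃ B ∈ I, ∀ a ∈ A, (a \ B).Finite} := ⟨F, hF, rfl, h⟩
  exact absurd (csInf_le' hmem : addStar I ≤ #F) (not_le.mpr hlt)

lemma my_I_unbounded {I : Set (Set ℕ)} (hI : IsIdealOmega I) (htall : IsTall I) :
    ¬ ∃ B ∈ I, ∀ a ∈ I, (a \ B).Finite := by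
  rintro ⟨B, hB, hb⟩
  by_cases hc : (Bᶜ : Set ℕ).Finite
  · have : (univ : Set ℕ) ∈ I := by
      have := hI.2.1 B hB Bᶜ (hI.2.2.1 _ hc)
      simpa [union_compl_self] using this
    exact hI.2.2.2 this
  · obtain ⟨A, hA, hsub, hAinf⟩ := htall Bᶜ (fun h => hc h)
    have : A ⊆ A \ B := fun x hx => ⟨hx, hsub hx⟩
    exact (hAinf.mono this) (hb A hA)

lemma my_aleph0_le_addStar {I : Set (Set ℕ)} (hI : IsIdealOmega I) (htall : IsTall I) :
    ℵ₀ ≤ addStar I := by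
  have hmem : #I ∈ {c | ∃ A : Set (Set ℕ), A ⊆ I ∧ Cardinal.mk A = c ∧
      ¬ ∃ B ∈ I, ∀ a ∈ A, (a \ B).Finite} := ⟨I, subset_rfl, rfl, my_I_unbounded hI htall⟩
  apply le_csInf ⟨#I, hmem⟩
  rintro c ⟨A, hAI, rfl, hunb⟩
  by_contra h
  push_neg at h
  have hfin : A.Finite := Cardinal.lt_aleph0_iff_set_finite.mp h
  refine hunb ⟨⋃₀ A, my_sUnion_mem hI hfin hAI, fun a ha => ?_⟩
  have : a \ ⋃₀ A = ∅ := by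
    rw [diff_eq_empty]
    exact subset_sUnion_of_mem ha
  simp [this]

lemma my_succ_lt {a κ : Cardinal} (hκ : ℵ₀ ≤ κ) (h : a < κ) : a + 1 < κ := by
  rcases lt_or_ge a ℵ₀ with h' | h'
  · exact lt_of_lt_of_le (Cardinal.add_lt_aleph0 h' Cardinal.one_lt_aleph0) hκ
  · rwa [Cardinal.add_one_eq h']

theorem stmt1 (I : Set (Set ℕ)) (hI : IsIdealOmega I) (htall : IsTall I)
    (κ : Cardinal) (hadd : addStar I = κ) (hcov : covStar I = κ) :
    ∃ A : Ordinal → Set ℕ,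
      (∀ α < κ.ord, A α ∈ I) ∧
      (∀ β α, β ≤ α → α < κ.ord → (A β \ A α).Finite) ∧
      (∀ X : Set ℕ, X.Infinite → ∃ α < κ.ord, (X ∩ A α).Infinite) := by
  have hκinf : ℵ₀ ≤ κ := hadd ▸ my_aleph0_le_addStar hI htall
  -- obtain the covering family of size κ
  have hne : {c | ∃ D : Set (Set ℕ), D ⊆ I ∧ Cardinal.mk D = c ∧
      ∀ X : Set ℕ, X.Infinite → ∃ A ∈ D, (X ∩ A).Infinite}.Nonempty := by
    refine ⟨#I, I, subset_rfl, rfl, fun X hX => ?_⟩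
    obtain ⟨A, hA, hsub, hAinf⟩ := htall X hX
    exact ⟨A, hA, by rwa [inter_eq_self_of_subset_right hsub]⟩
  obtain ⟨D, hDI, hDcard, hDcov⟩ := csInf_mem hne
  rw [show sInf _ = covStar I from rfl, hcov] at hDcard
  -- enumerate D by κ.ord.toType
  have hT : #(κ.ord.ToType) = #D := by
    rw [Cardinal.mk_ord_toType, hDcard]
  obtain ⟨e⟩ := Cardinal.eq.mp hT
  set T := κ.ord.ToType
  -- key step: bound for the family at stage t
  have key : ∀ (t : T) (ih : ∀ s, s < t → Set ℕ), ∃ B, B ∈ I ∧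
      (((e t : Set ℕ)) \ B).Finite ∧
      ∀ s (h : s < t), ih s h ∈ I → (ih s h \ B).Finite := by
    intro t ih
    set F : Set (Set ℕ) := insert ((e t : Set ℕ))
      {x | x ∈ I ∧ ∃ s : Set.Iio t, ih s.1 s.2 = x} with hF
    have hFI : F ⊆ I := by
      rintro x (rfl | ⟨hx, -⟩)
      · exact hDI (e t).2
      · exact hx
    have hFcard : #F < addStar I := by
      have h1 : #({x | x ∈ I ∧ ∃ s : Set.Iio t, ih s.1 s.2 = x} : Set (Set ℕ))
          ≤ #(Set.Iio t) := by
        refine le_trans (Cardinal.mk_le_mk_of_subset ?_) (Cardinal.mk_range_le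
          (f := fun s : Set.Iio t => ih s.1 s.2))
        rintro x ⟨-, s, rfl⟩
        exact ⟨s, rfl⟩
      have h2 : #(Set.Iio t) < κ := Cardinal.mk_Iio_toType_ord_lt t
      calc #F ≤ _ + 1 := Cardinal.mk_insert_le
        _ ≤ #(Set.Iio t) + 1 := add_le_add_left h1 1
        _ < κ := my_succ_lt hκinf h2
        _ = addStar I := hadd.symm
    obtain ⟨B, hB, hb⟩ := my_exists_bound hFI hFcard
    refine ⟨B, hB, hb _ (mem_insert _ _), fun s h hs => hb _ (Or.inr ⟨hs, ⟨s, h⟩, rfl⟩)⟩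
  -- build the tower by well-founded recursion
  let A' : T → Set ℕ := WellFounded.fix wellFounded_lt
    (fun t ih => (key t ih).choose)
  have hA'eq : ∀ t, A' t = (key t (fun s _ => A' s)).choose := fun t =>
    WellFounded.fix_eq _ _ t
  have hspec : ∀ t : T, A' t ∈ I ∧ (((e t : Set ℕ)) \ A' t).Finite ∧
      ∀ s (h : s < t), A' s ∈ I → (A' s \ A' t).Finite := by
    intro t
    rw [hA'eq t]
    exact (key t (fun s _ => A' s)).choose_spec
  have hA'I : ∀ t, A' t ∈ I := fun t => (hspec t).1
  have hA'D : ∀ t, (((e t : Set ℕ)) \ A' t).Finite := fun t => (hspec t).2.1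
  have hA'mono : ∀ s t, s < t → (A' s \ A' t).Finite := fun s t h =>
    (hspec t).2.2 s h (hA'I s)
  -- transfer to ordinals
  refine ⟨fun α => if h : α < κ.ord then A' (Ordinal.ToType.mk (o := κ.ord) ⟨α, h⟩) else ∅,
    fun α hα => ?_, fun β α hβα hα => ?_, fun X hX => ?_⟩
  · dsimp only
    rw [dif_pos hα]; exact hA'I _
  · have hβ : β < κ.ord := lt_of_le_of_lt hβα hα
    dsimp only
    rw [dif_pos hα, dif_pos hβ]
    rcases eq_or_lt_of_le hβα with rfl | hlt
    · simp
    · exact hA'mono _ _ ((Ordinal.ToType.mk (o := κ.ord)).lt_iff_lt.mpr hlt)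
  · obtain ⟨d, hd, hXd⟩ := hDcov X hX
    set t : T := e.symm ⟨d, hd⟩ with ht
    have het : ((e t : Set ℕ)) = d := by rw [ht, Equiv.apply_symm_apply]
    set p := (Ordinal.ToType.mk (o := κ.ord)).symm t with hp
    refine ⟨p.1, p.2, ?_⟩
    have hAp : (fun α => if h : α < κ.ord then A' (Ordinal.ToType.mk (o := κ.ord) ⟨α, h⟩) else ∅)
        p.1 = A' t := by
      dsimp only
      rw [dif_pos (show (p : Ordinal) < κ.ord from p.2)]
      rw [show (⟨p.1, p.2⟩ : Set.Iio κ.ord) = p from rfl, hp,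
        OrderIso.apply_symm_apply]
    rw [hAp]
    intro hfin
    have hsub : X ∩ d ⊆ (X ∩ A' t) ∪ (d \ A' t) := by
      rintro x ⟨hx1, hx2⟩
      by_cases hx : x ∈ A' t
      · exact Or.inl ⟨hx1, hx⟩
      · exact Or.inr ⟨hx2, hx⟩
    exact hXd ((hfin.union (het ▸ hA'D t)).subset hsub)
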